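/- Let ω : [0,∞) → ℝ be defined by ω(r) = (1/2)∫₀^r ρ² e^{(1/2)∫_r^ρ φ'(z)² dz} [(1 + ρ²)φ'(ρ)² + 2 − 2cosh(√2 φ(ρ))] dρ with φ(r) = 1 − e^{−a²/r²} for a > 0. Then for all r > 0, 1 + r² − ω(r)/r > 0. -/

import Mathlib

open Real MeasureTheory intervalIntegral

lemma te_bound (t : ℝ) (ht : 0 ≤ t) : t * Real.exp (-t) ≤ Real.exp (-1) := by
  have h := Real.add_one_le_exp (t - 1)
  have h2 : Real.exp (t - 1) * Real.exp (-t) = Real.exp (-1) := by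
    rw [← Real.exp_add]; ring_nf
  have h3 : 0 < Real.exp (-t) := Real.exp_pos _
  nlinarith

lemma deriv_phi (a ρ : ℝ) (hρ : ρ ≠ 0) :
    deriv (fun x : ℝ => 1 - Real.exp (-a ^ 2 / x ^ 2)) ρ
      = -(Real.exp (-a ^ 2 / ρ ^ 2) * (2 * a ^ 2 * ρ / ρ ^ 4)) := by
  have h1 : HasDerivAt (fun x : ℝ => x ^ 2) (2 * ρ) ρ := by
    simpa using hasDerivAt_pow 2 ρ
  have h2 : HasDerivAt (fun x : ℝ => -a ^ 2 / x ^ 2)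
      ((0 * ρ ^ 2 - (-a ^ 2) * (2 * ρ)) / (ρ ^ 2) ^ 2) ρ :=
    (hasDerivAt_const ρ (-a ^ 2)).div h1 (pow_ne_zero 2 hρ)
  have h3 := (hasDerivAt_const ρ 1).sub h2.exp
  rw [show (fun x : ℝ => 1 - Real.exp (-a ^ 2 / x ^ 2)) = ((fun _ : ℝ => (1:ℝ)) - fun x : ℝ => Real.exp (-a ^ 2 / x ^ 2)) from rfl, h3.deriv]
  ring_nf

lemma sq_deriv_bound (a ρ : ℝ) (hρ : 0 < ρ) :
    ρ ^ 2 * (deriv (fun x : ℝ => 1 - Real.exp (-a ^ 2 / x ^ 2)) ρ) ^ 2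
      ≤ 4 * Real.exp (-2) := by
  rw [deriv_phi a ρ hρ.ne']
  set t : ℝ := a ^ 2 / ρ ^ 2 with htdef
  have ht : 0 ≤ t := div_nonneg (sq_nonneg a) (sq_nonneg ρ)
  have key : t * Real.exp (-t) ≤ Real.exp (-1) := te_bound t ht
  have hkey2 : (t * Real.exp (-t)) ^ 2 ≤ Real.exp (-1) ^ 2 := by
    have hnn : 0 ≤ t * Real.exp (-t) := mul_nonneg ht (Real.exp_pos _).le
    nlinarith
  have hexp2 : Real.exp (-1) ^ 2 = Real.exp (-2) := by
    rw [pow_two, ← Real.exp_add]; norm_num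
  have hLHS : ρ ^ 2 * (-(Real.exp (-a ^ 2 / ρ ^ 2) * (2 * a ^ 2 * ρ / ρ ^ 4))) ^ 2
      = 4 * (t * Real.exp (-t)) ^ 2 := by
    have h1 : -a ^ 2 / ρ ^ 2 = -t := by rw [htdef]; ring
    rw [h1, htdef]
    field_simp
    ring
  rw [hLHS]
  nlinarith [hkey2, hexp2]

theorem no_minimal_surfaces (a : ℝ) (ha : 0 < a) (φ ω : ℝ → ℝ)
    (hφ : ∀ r : ℝ, φ r = 1 - Real.exp (-a ^ 2 / r ^ 2))
    (hω : ∀ r : ℝ, ω r = (1 / 2) * ∫ ρ in (0 : ℝ)..r,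
      ρ ^ 2 * Real.exp ((1 / 2) * ∫ z in r..ρ, (deriv φ z) ^ 2) *
        ((1 + ρ ^ 2) * (deriv φ ρ) ^ 2 + 2 - 2 * Real.cosh (Real.sqrt 2 * φ ρ))) :
    ∀ r : ℝ, 0 < r → 0 < 1 + r ^ 2 - ω r / r := by
  have hφfun : φ = fun x : ℝ => 1 - Real.exp (-a ^ 2 / x ^ 2) := funext hφ
  intro r hr
  set g : ℝ → ℝ := fun ρ => ρ ^ 2 * Real.exp ((1 / 2) * ∫ z in r..ρ, (deriv φ z) ^ 2) *
        ((1 + ρ ^ 2) * (deriv φ ρ) ^ 2 + 2 - 2 * Real.cosh (Real.sqrt 2 * φ ρ)) with hg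
  set h : ℝ → ℝ := fun ρ => 4 * Real.exp (-2) * (1 + ρ ^ 2) with hh
  -- pointwise bound
  have hpt : ∀ ρ ∈ Set.Icc (0 : ℝ) r, g ρ ≤ h ρ := by
    intro ρ hρ
    have hRHSnn : 0 ≤ h ρ := by
      have := Real.exp_pos (-2 : ℝ)
      have h1 : (0:ℝ) ≤ 1 + ρ ^ 2 := by positivity
      positivity
    rcases eq_or_lt_of_le hρ.1 with hρ0 | hρ0
    · subst hρ0
      simpa [hg] using hRHSnn
    -- exponential factor ≤ 1
    have hEle : Real.exp ((1 / 2) * ∫ z in r..ρ, (deriv φ z) ^ 2) ≤ 1 := by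
      rw [Real.exp_le_one_iff]
      have hnn : (0:ℝ) ≤ ∫ z in ρ..r, (deriv φ z) ^ 2 :=
        intervalIntegral.integral_nonneg hρ.2 (fun z _ => sq_nonneg _)
      rw [intervalIntegral.integral_symm]
      nlinarith
    have hEpos : 0 < Real.exp ((1 / 2) * ∫ z in r..ρ, (deriv φ z) ^ 2) := Real.exp_pos _
    have hcosh : 1 ≤ Real.cosh (Real.sqrt 2 * φ ρ) := Real.one_le_cosh _
    set B : ℝ := (1 + ρ ^ 2) * (deriv φ ρ) ^ 2 + 2 - 2 * Real.cosh (Real.sqrt 2 * φ ρ) with hB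
    have hBle : B ≤ (1 + ρ ^ 2) * (deriv φ ρ) ^ 2 := by rw [hB]; nlinarith
    rcases le_or_gt B 0 with hB0 | hB0
    · have : g ρ ≤ 0 := by
        rw [hg]
        exact mul_nonpos_of_nonneg_of_nonpos (by positivity) hB0
      linarith
    · have hsq : ρ ^ 2 * (deriv φ ρ) ^ 2 ≤ 4 * Real.exp (-2) := by
        rw [hφfun]; exact sq_deriv_bound a ρ hρ0
      have step1 : g ρ ≤ ρ ^ 2 * B := by
        rw [hg]
        nlinarith [sq_nonneg ρ, mul_pos (mul_pos (pow_pos hρ0 2) hEpos) hB0]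
      have step2 : ρ ^ 2 * B ≤ ρ ^ 2 * ((1 + ρ ^ 2) * (deriv φ ρ) ^ 2) :=
        mul_le_mul_of_nonneg_left hBle (sq_nonneg ρ)
      have step3 : ρ ^ 2 * ((1 + ρ ^ 2) * (deriv φ ρ) ^ 2) ≤ 4 * Real.exp (-2) * (1 + ρ ^ 2) := by
        have h1 : (0:ℝ) ≤ 1 + ρ ^ 2 := by positivity
        nlinarith [sq_nonneg (deriv φ ρ), sq_nonneg ρ]
      calc g ρ ≤ ρ ^ 2 * B := step1
        _ ≤ _ := step2
        _ ≤ h ρ := step3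
  -- h is interval integrable and its integral computes
  have hhcont : Continuous h := by fun_prop
  have hhint : IntervalIntegrable h volume 0 r := hhcont.intervalIntegrable 0 r
  have hhval : (∫ ρ in (0:ℝ)..r, h ρ) = 4 * Real.exp (-2) * (r + r ^ 3 / 3) := by
    rw [hh]
    simp only []
    rw [intervalIntegral.integral_const_mul]
    have : (∫ ρ in (0:ℝ)..r, (1 + ρ ^ 2)) = r + r ^ 3 / 3 := by
      rw [intervalIntegral.integral_add intervalIntegrable_const
        ((continuous_pow 2).intervalIntegrable 0 r)]
      simp [integral_pow]
      ring
    rw [this]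
  have hωle : ω r ≤ 2 * Real.exp (-2) * (r + r ^ 3 / 3) := by
    rw [hω r]
    by_cases hgint : IntervalIntegrable g volume 0 r
    · have := intervalIntegral.integral_mono_on hr.le hgint hhint hpt
      rw [hhval] at this
      linarith
    · rw [show (∫ ρ in (0:ℝ)..r,
        ρ ^ 2 * Real.exp ((1 / 2) * ∫ z in r..ρ, (deriv φ z) ^ 2) *
        ((1 + ρ ^ 2) * (deriv φ ρ) ^ 2 + 2 - 2 * Real.cosh (Real.sqrt 2 * φ ρ))) = ∫ ρ in (0:ℝ)..r, g ρ from rfl,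
        intervalIntegral.integral_undef hgint]
      have := Real.exp_pos (-2:ℝ)
      nlinarith [pow_pos hr 3]
  -- conclude
  have hexp2 : Real.exp (-2 : ℝ) ≤ 1 / 3 := by
    have h1 : (3:ℝ) ≤ Real.exp 2 := by nlinarith [Real.add_one_le_exp (2:ℝ)]
    have h2 : Real.exp (-2:ℝ) * Real.exp 2 = 1 := by rw [← Real.exp_add]; norm_num
    nlinarith [Real.exp_pos (-2:ℝ)]
  have hfin : ω r < r * (1 + r ^ 2) := by
    have h3 : 0 < r + r ^ 3 / 3 := by positivity
    nlinarith [Real.exp_pos (-2:ℝ), pow_pos hr 3]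
  rw [sub_pos, div_lt_iff₀ hr]
  nlinarith [hfin]
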